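/- Let X be a complete metric space and F = {f₁,...,fₙ} a family of generalized Matkowski contractions of order m (a GIFS). Then there exists a unique nonempty compact set A ⊆ X such that A = f₁(A × ... × A) ∪ ... ∪ fₙ(A × ... × A). -/

import Mathlib

open TopologicalSpace Filter

section Matkowski

variable (φ : ℝ → ℝ)

lemma phi_lt_self (hφ_mono : MonotoneOn φ (Set.Ici 0))
    (hφ_nonneg : ∀ t, 0 ≤ t → 0 ≤ φ t)
    (hφ_iter : ∀ t > 0, Tendsto (fun k => φ^[k] t) atTop (nhds 0)) :
    ∀ t > 0, φ t < t := by
  intro t ht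
  by_contra h
  push_neg at h
  have key : ∀ k, t ≤ φ^[k] t := by
    intro k
    induction k with
    | zero => simp
    | succ k ih =>
      rw [Function.iterate_succ_apply']
      calc t ≤ φ t := h
        _ ≤ φ (φ^[k] t) := hφ_mono (le_of_lt ht) (le_trans (le_of_lt ht) ih) ih
  have := ge_of_tendsto (hφ_iter t ht) (Eventually.of_forall key)
  linarith

lemma phi_zero (hφ_mono : MonotoneOn φ (Set.Ici 0))
    (hφ_nonneg : ∀ t, 0 ≤ t → 0 ≤ φ t)
    (hφ_iter : ∀ t > 0, Tendsto (fun k => φ^[k] t) atTop (nhds 0)) :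
    φ 0 = 0 := by
  by_contra h
  have h0 : 0 < φ 0 := lt_of_le_of_ne (hφ_nonneg 0 le_rfl) (Ne.symm h)
  have key : ∀ k, φ 0 ≤ φ^[k+1] 1 := by
    intro k
    rw [Function.iterate_succ_apply']
    have : (0:ℝ) ≤ φ^[k] 1 := by
      induction k with
      | zero => simp
      | succ k ih => rw [Function.iterate_succ_apply']; exact hφ_nonneg _ ih
    exact hφ_mono (Set.mem_Ici.2 le_rfl) this this
  have htend : Tendsto (fun k => φ^[k+1] (1:ℝ)) atTop (nhds 0) :=
    (hφ_iter 1 one_pos).comp (tendsto_add_atTop_nat 1)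
  have := ge_of_tendsto htend (Eventually.of_forall key)
  linarith

lemma matkowski_fixed {Y : Type*} [MetricSpace Y] [CompleteSpace Y] [Nonempty Y]
    (hφ_mono : MonotoneOn φ (Set.Ici 0))
    (hφ_nonneg : ∀ t, 0 ≤ t → 0 ≤ φ t)
    (hφ_iter : ∀ t > 0, Tendsto (fun k => φ^[k] t) atTop (nhds 0))
    (F : Y → Y) (hF : ∀ x y, dist (F x) (F y) ≤ φ (dist x y)) :
    ∃! a, F a = a := by
  have hlt := phi_lt_self φ hφ_mono hφ_nonneg hφ_iter
  have hzero := phi_zero φ hφ_mono hφ_nonneg hφ_iter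
  have hle : ∀ t, 0 ≤ t → φ t ≤ t := by
    intro t ht
    rcases eq_or_lt_of_le ht with h | h
    · rw [← h, hzero]
    · exact (hlt t h).le
  -- F is nonexpansive, hence continuous
  have hnonexp : ∀ x y : Y, dist (F x) (F y) ≤ dist x y :=
    fun x y => (hF x y).trans (hle _ dist_nonneg)
  have hcont : Continuous F := (LipschitzWith.of_dist_le_mul (fun x y => by
    simpa using hnonexp x y) : LipschitzWith 1 F).continuous
  obtain ⟨x0⟩ : Nonempty Y := inferInstance
  set u : ℕ → Y := fun k => F^[k] x0 with hu
  have hsucc : ∀ k, u (k+1) = F (u k) := fun k => Function.iterate_succ_apply' F k x0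
  -- distances of consecutive terms
  have hphik_nonneg : ∀ k, 0 ≤ φ^[k] (dist (u 1) (u 0)) := by
    intro k
    induction k with
    | zero => simpa using dist_nonneg
    | succ k ih => rw [Function.iterate_succ_apply']; exact hφ_nonneg _ ih
  have hcons : ∀ k, dist (u (k+1)) (u k) ≤ φ^[k] (dist (u 1) (u 0)) := by
    intro k
    induction k with
    | zero => simp
    | succ k ih =>
      rw [Function.iterate_succ_apply']
      calc dist (u (k+2)) (u (k+1)) = dist (F (u (k+1))) (F (u k)) := by
            rw [hsucc, hsucc]
        _ ≤ φ (dist (u (k+1)) (u k)) := hF _ _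
        _ ≤ φ (φ^[k] (dist (u 1) (u 0))) := hφ_mono dist_nonneg (hphik_nonneg k) ih
  -- Cauchy
  have hcauchy : CauchySeq u := by
    rw [Metric.cauchySeq_iff']
    intro ε hε
    have hδ : 0 < ε - φ ε := by have := hlt ε hε; linarith
    -- find N with dist (u (N+1)) (u N) < ε - φ ε
    obtain ⟨N, hN⟩ : ∃ N, dist (u (N+1)) (u N) < ε - φ ε := by
      rcases eq_or_lt_of_le (dist_nonneg (x := u 1) (y := u 0)) with h | h
      · refine ⟨0, ?_⟩
        simpa [← h] using hδ
      · have := (hφ_iter _ h).eventually (eventually_lt_nhds hδ)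
        obtain ⟨N, hN⟩ := this.exists
        exact ⟨N, lt_of_le_of_lt (hcons N) hN⟩
    refine ⟨N, fun k hk => ?_⟩
    obtain ⟨j, rfl⟩ := Nat.exists_eq_add_of_le hk
    clear hk
    induction j with
    | zero => simpa using hε
    | succ j ih =>
      have : dist (u (N + (j+1))) (u N) ≤ φ (dist (u (N+j)) (u N)) + dist (u (N+1)) (u N) := by
        have h1 : dist (u (N+(j+1))) (u (N+1)) ≤ φ (dist (u (N+j)) (u N)) := by
          have : u (N + (j+1)) = F (u (N+j)) := by rw [← hsucc]; ring_nf
          rw [this, hsucc]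
          exact hF _ _
        calc dist (u (N+(j+1))) (u N) ≤ dist (u (N+(j+1))) (u (N+1)) + dist (u (N+1)) (u N) :=
              dist_triangle _ _ _
          _ ≤ _ := by linarith
      have h2 : φ (dist (u (N+j)) (u N)) ≤ φ ε := hφ_mono dist_nonneg hε.le ih.le
      calc dist (u (N+(j+1))) (u N) ≤ φ ε + dist (u (N+1)) (u N) := by linarith
        _ < φ ε + (ε - φ ε) := by linarith
        _ = ε := by ring
  obtain ⟨a, ha⟩ := cauchySeq_tendsto_of_complete hcauchy
  have hfix : F a = a := by
    have h1 : Tendsto (fun k => u (k+1)) atTop (nhds a) := ha.comp (tendsto_add_atTop_nat 1)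
    have h2 : Tendsto (fun k => F (u k)) atTop (nhds (F a)) := (hcont.tendsto a).comp ha
    have : (fun k => u (k+1)) = fun k => F (u k) := funext hsucc
    rw [this] at h1
    exact tendsto_nhds_unique h2 h1
  refine ⟨a, hfix, ?_⟩
  intro b hb
  by_contra hne
  have hd : 0 < dist b a := dist_pos.2 hne
  have : dist b a ≤ φ (dist b a) := by
    calc dist b a = dist (F b) (F a) := by rw [hb, hfix]
    _ ≤ φ (dist b a) := hF _ _
  have := hlt _ hd
  linarith

end Matkowski

theorem stmt3 {X : Type*} [MetricSpace X] [CompleteSpace X] [Nonempty X]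
    {n m : ℕ} (hn : 0 < n)
    (φ : ℝ → ℝ) (hφ_mono : MonotoneOn φ (Set.Ici 0))
    (hφ_nonneg : ∀ t, 0 ≤ t → 0 ≤ φ t)
    (hφ_iter : ∀ t > 0, Tendsto (fun k => φ^[k] t) atTop (nhds 0))
    (f : Fin n → (Fin m → X) → X)
    (hf : ∀ i, ∀ x y : Fin m → X, dist (f i x) (f i y) ≤ φ (dist x y)) :
    ∃! A : NonemptyCompacts X,
      (A : Set X) = ⋃ i, f i '' Set.pi Set.univ (fun _ : Fin m => (A : Set X)) := by
  have hlt := phi_lt_self φ hφ_mono hφ_nonneg hφ_iter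
  have hzero := phi_zero φ hφ_mono hφ_nonneg hφ_iter
  have hle : ∀ t, 0 ≤ t → φ t ≤ t := by
    intro t ht
    rcases eq_or_lt_of_le ht with h | h
    · rw [← h, hzero]
    · exact (hlt t h).le
  -- each f i is nonexpansive, hence continuous
  have hcont : ∀ i, Continuous (f i) := by
    intro i
    refine (LipschitzWith.of_dist_le_mul (K := 1) (fun x y => ?_)).continuous
    simpa using (hf i x y).trans (hle _ dist_nonneg)
  -- the set-map
  set FSet : NonemptyCompacts X → Set X :=
    fun A => ⋃ i, f i '' Set.pi Set.univ (fun _ : Fin m => (A : Set X)) with hFSet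
  have hpiC : ∀ A : NonemptyCompacts X,
      IsCompact (Set.pi Set.univ (fun _ : Fin m => (A : Set X))) :=
    fun A => isCompact_univ_pi (fun _ => A.isCompact)
  have hcompact : ∀ A, IsCompact (FSet A) := by
    intro A
    exact isCompact_iUnion (fun i => (hpiC A).image (hcont i))
  have hne : ∀ A, (FSet A).Nonempty := by
    intro A
    obtain ⟨a, ha⟩ := A.nonempty
    refine ⟨f ⟨0, hn⟩ (fun _ => a), Set.mem_iUnion.2 ⟨⟨0, hn⟩, ?_⟩⟩
    exact Set.mem_image_of_mem _ (by intro j _; exact ha)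
  set F : NonemptyCompacts X → NonemptyCompacts X :=
    fun A => ⟨⟨FSet A, hcompact A⟩, hne A⟩ with hF
  -- contraction estimate
  have hkey : ∀ A B : NonemptyCompacts X, dist (F A) (F B) ≤ φ (dist A B) := by
    intro A B
    rw [Metric.NonemptyCompacts.dist_eq, Metric.NonemptyCompacts.dist_eq]
    have hr : 0 ≤ φ (Metric.hausdorffDist (A : Set X) (B : Set X)) :=
      hφ_nonneg _ Metric.hausdorffDist_nonneg
    have main : ∀ A B : NonemptyCompacts X, ∀ x ∈ FSet A, ∃ y ∈ FSet B,
        dist x y ≤ φ (Metric.hausdorffDist (A : Set X) (B : Set X)) := by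
      intro A B x hx
      have hfin : EMetric.hausdorffEdist (A : Set X) (B : Set X) ≠ ⊤ :=
        Metric.hausdorffEdist_ne_top_of_nonempty_of_bounded A.nonempty B.nonempty
          A.isCompact.isBounded B.isCompact.isBounded
      obtain ⟨i, a, ha, rfl⟩ : ∃ i a, a ∈ Set.pi Set.univ (fun _ : Fin m => (A : Set X))
          ∧ f i a = x := by
        obtain ⟨i, hi⟩ := Set.mem_iUnion.1 hx
        obtain ⟨a, ha, rfl⟩ := hi
        exact ⟨i, a, ha, rfl⟩
      have hchoice : ∀ j : Fin m, ∃ y ∈ (B : Set X),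
          dist (a j) y ≤ Metric.hausdorffDist (A : Set X) (B : Set X) := by
        intro j
        obtain ⟨y, hy, hdy⟩ := B.isCompact.exists_infDist_eq_dist B.nonempty (a j)
        refine ⟨y, hy, ?_⟩
        rw [← hdy]
        exact Metric.infDist_le_hausdorffDist_of_mem (ha j (Set.mem_univ j)) hfin
      choose b hb hbd using hchoice
      refine ⟨f i b, Set.mem_iUnion.2 ⟨i, Set.mem_image_of_mem _ (fun j _ => hb j)⟩, ?_⟩
      have hab : dist a b ≤ Metric.hausdorffDist (A : Set X) (B : Set X) :=
        dist_pi_le_iff Metric.hausdorffDist_nonneg |>.2 (fun j => hbd j)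
      calc dist (f i a) (f i b) ≤ φ (dist a b) := hf i a b
        _ ≤ φ (Metric.hausdorffDist (A : Set X) (B : Set X)) :=
          hφ_mono dist_nonneg Metric.hausdorffDist_nonneg hab
    refine Metric.hausdorffDist_le_of_mem_dist hr (main A B) ?_
    intro x hx
    obtain ⟨y, hy, hxy⟩ := main B A x hx
    rw [Metric.hausdorffDist_comm] at hxy
    exact ⟨y, hy, hxy⟩
  haveI : Nonempty (NonemptyCompacts X) := by
    obtain ⟨x⟩ : Nonempty X := inferInstance
    exact ⟨⟨⟨{x}, isCompact_singleton⟩, Set.singleton_nonempty x⟩⟩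
  obtain ⟨A, hA, hAu⟩ := matkowski_fixed φ hφ_mono hφ_nonneg hφ_iter F hkey
  refine ⟨A, ?_, ?_⟩
  · have : (F A : Set X) = (A : Set X) := by rw [hA]
    exact this.symm
  · intro B hB
    apply hAu
    ext1
    exact hB.symm
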